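/- Let 0 < σ < 1, and let K = #{j : r^W_j < σ} be the number of women with public rating less than σ. Then with probability at least 1 − exp(−σ·n/3) − exp(−σ·n/6) − exp(−σ·n/8): (1/2)·σ·n < K < 2·σ·n, and each of the K lowest-rated men has public rating less than 3σ. -/

import Mathlib

open MeasureTheory Finset
open scoped ENNReal

noncomputable section

/-- The uniform probability measure on `[0,1]`. -/
def unif : Measure ℝ := volume.restrict (Set.Icc (0:ℝ) 1)

/-- Joint law of the men's and women's public ratings: `2n` i.i.d. uniforms on `[0,1]`. -/
def ratingsMeasure (n : ℕ) : Measure ((Fin n → ℝ) × (Fin n → ℝ)) :=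
  (Measure.pi fun _ => unif).prod (Measure.pi fun _ => unif)

instance : IsProbabilityMeasure unif := by
  constructor
  simp [unif, Real.volume_Icc]

lemma unif_Iio {b : ℝ} (hb0 : 0 ≤ b) (hb1 : b ≤ 1) :
    unif (Set.Iio b) = ENNReal.ofReal b := by
  rw [unif, Measure.restrict_apply measurableSet_Iio]
  have : Set.Iio b ∩ Set.Icc 0 1 = Set.Ico 0 b := by
    ext x
    simp only [Set.mem_inter_iff, Set.mem_Iio, Set.mem_Icc, Set.mem_Ico]
    constructor
    · rintro ⟨h1, h2, h3⟩; exact ⟨h2, h1⟩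
    · rintro ⟨h1, h2⟩; exact ⟨h2, h1, le_trans h2.le hb1⟩
  rw [this, Real.volume_Ico, sub_zero]

lemma unif_Ici {b : ℝ} (hb0 : 0 ≤ b) :
    unif (Set.Ici b) = ENNReal.ofReal (1 - b) := by
  rw [unif, Measure.restrict_apply measurableSet_Ici]
  have : Set.Ici b ∩ Set.Icc 0 1 = Set.Icc b 1 := by
    ext x
    simp only [Set.mem_inter_iff, Set.mem_Ici, Set.mem_Icc]
    constructor
    · rintro ⟨h1, h2, h3⟩; exact ⟨h1, h3⟩
    · rintro ⟨h1, h2⟩; exact ⟨h1, hb0.trans h1, h2⟩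
  rw [this, Real.volume_Icc]

lemma lintegral_pi_pow (μ : Measure ℝ) [IsProbabilityMeasure μ] {f : ℝ → ℝ≥0∞}
    (hf : Measurable f) (n : ℕ) :
    ∫⁻ x : Fin n → ℝ, ∏ i, f (x i) ∂(Measure.pi fun _ => μ) = (∫⁻ x, f x ∂μ) ^ n := by
  induction n with
  | zero =>
      simp [Measure.pi_of_empty (fun _ : Fin 0 => μ)]
  | succ n ih =>
      have hmp := measurePreserving_piFinSuccAbove (fun _ : Fin (n+1) => μ) 0
      have hmeas : Measurable fun p : ℝ × (Fin n → ℝ) => f p.1 * ∏ i, f (p.2 i) := by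
        exact (hf.comp measurable_fst).mul
          (Finset.measurable_prod _ fun i _ => hf.comp ((measurable_pi_apply i).comp measurable_snd))
      calc ∫⁻ x : Fin (n+1) → ℝ, ∏ i, f (x i) ∂(Measure.pi fun _ => μ)
          = ∫⁻ p : ℝ × (Fin n → ℝ), f p.1 * ∏ i, f (p.2 i)
              ∂(μ.prod (Measure.pi fun _ : Fin n => μ)) := by
            rw [← hmp.lintegral_comp hmeas]
            congr 1
            ext x
            rw [Fin.prod_univ_succ]
            simp [MeasurableEquiv.piFinSuccAbove, Fin.insertNthEquiv, Fin.succAbove, Fin.tail]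
        _ = (∫⁻ x, f x ∂μ) * ∫⁻ x : Fin n → ℝ, ∏ i, f (x i) ∂(Measure.pi fun _ => μ) := by
            exact lintegral_prod_mul hf.aemeasurable
              (Finset.measurable_prod _ fun i _ => hf.comp (measurable_pi_apply i)).aemeasurable
        _ = (∫⁻ x, f x ∂μ) ^ (n+1) := by rw [ih]; ring

lemma cnt_measurable (n : ℕ) (b : ℝ) :
    Measurable (fun ω : Fin n → ℝ => (((univ : Finset (Fin n)).filter fun j => ω j < b).card : ℝ)) := by
  simp_rw [Finset.card_filter]
  push_cast
  exact Finset.measurable_sum _ fun j _ =>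
    Measurable.ite ((measurable_pi_apply j) measurableSet_Iio) measurable_const measurable_const

lemma chernoff (n : ℕ) {b : ℝ} (hb0 : 0 ≤ b) (hb1 : b ≤ 1) (t c : ℝ) :
    (Measure.pi fun _ : Fin n => unif)
        {ω | Real.exp c ≤ Real.exp (t * (((univ : Finset (Fin n)).filter fun j => ω j < b).card : ℝ))}
      ≤ ENNReal.ofReal (Real.exp (-c) * (b * Real.exp t + (1 - b)) ^ n) := by
  set ν := (Measure.pi fun _ : Fin n => unif)
  set f : ℝ → ℝ≥0∞ := fun x => if x < b then ENNReal.ofReal (Real.exp t) else 1 with hfdef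
  have hfmeas : Measurable f :=
    Measurable.ite measurableSet_Iio measurable_const measurable_const
  set F : (Fin n → ℝ) → ℝ≥0∞ := fun ω =>
    ENNReal.ofReal (Real.exp (t * (((univ : Finset (Fin n)).filter fun j => ω j < b).card : ℝ))) with hFdef
  have hFprod : ∀ ω, F ω = ∏ i, f (ω i) := by
    intro ω
    have : ∏ i, f (ω i)
        = ENNReal.ofReal (Real.exp t) ^ ((univ : Finset (Fin n)).filter fun j => ω j < b).card := by
      rw [Finset.prod_ite (f := fun _ => ENNReal.ofReal (Real.exp t)) (g := fun _ => 1),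
        Finset.prod_const, Finset.prod_const, one_pow, mul_one]
    rw [this, hFdef]
    rw [← ENNReal.ofReal_pow (Real.exp_nonneg t), ← Real.exp_nat_mul, mul_comm]
  have hFmeas : Measurable F := by
    rw [show F = fun ω => ∏ i, f (ω i) from funext hFprod]
    exact Finset.measurable_prod _ fun i _ => hfmeas.comp (measurable_pi_apply i)
  -- Markov
  have hset : {ω | Real.exp c ≤ Real.exp (t * (((univ : Finset (Fin n)).filter fun j => ω j < b).card : ℝ))}
      = {ω | ENNReal.ofReal (Real.exp c) ≤ F ω} := by
    ext ω
    simp only [Set.mem_setOf_eq, hFdef,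
      ENNReal.ofReal_le_ofReal_iff (Real.exp_nonneg _)]
  have hmarkov := mul_meas_ge_le_lintegral₀ (μ := ν) hFmeas.aemeasurable (ENNReal.ofReal (Real.exp c))
  -- compute the lintegral
  have hint : ∫⁻ ω, F ω ∂ν = (ENNReal.ofReal (b * Real.exp t + (1 - b))) ^ n := by
    have : ∫⁻ ω, F ω ∂ν = (∫⁻ x, f x ∂unif) ^ n := by
      simp_rw [hFprod]; exact lintegral_pi_pow unif hfmeas n
    rw [this]
    have hsplit : ∫⁻ x, f x ∂unif
        = ENNReal.ofReal (Real.exp t) * unif (Set.Iio b) + 1 * unif (Set.Ici b) := by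
      have hdecomp : ∀ x, f x = (Set.Iio b).indicator (fun _ => ENNReal.ofReal (Real.exp t)) x
          + (Set.Ici b).indicator (fun _ => (1:ℝ≥0∞)) x := by
        intro x
        by_cases h : x < b
        · simp [hfdef, h, Set.indicator, not_le.mpr h]
        · simp [hfdef, h, Set.indicator, not_lt.mp h]
      simp_rw [hdecomp]
      rw [lintegral_add_left (measurable_const.indicator measurableSet_Iio),
        lintegral_indicator measurableSet_Iio _, lintegral_indicator measurableSet_Ici _,
        setLIntegral_const, setLIntegral_const]
    rw [hsplit, unif_Iio hb0 hb1, unif_Ici hb0, one_mul,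
      ← ENNReal.ofReal_mul (Real.exp_nonneg t), ← ENNReal.ofReal_add (by positivity) (by linarith),
      mul_comm]
  rw [hset]
  rw [hint] at hmarkov
  have hc : ENNReal.ofReal (Real.exp c) ≠ 0 := by
    simp [ENNReal.ofReal_eq_zero, not_le, Real.exp_pos]
  have hX0 : 0 ≤ b * Real.exp t + (1 - b) :=
    add_nonneg (mul_nonneg hb0 (Real.exp_nonneg t)) (by linarith)
  calc ν {ω | ENNReal.ofReal (Real.exp c) ≤ F ω}
      ≤ ((ENNReal.ofReal (b * Real.exp t + (1 - b))) ^ n) / ENNReal.ofReal (Real.exp c) := by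
        rw [ENNReal.le_div_iff_mul_le (Or.inl hc) (Or.inl ENNReal.ofReal_ne_top)]
        rw [mul_comm]
        exact hmarkov
    _ = ENNReal.ofReal (Real.exp (-c) * (b * Real.exp t + (1 - b)) ^ n) := by
        rw [ENNReal.ofReal_mul (Real.exp_nonneg _), ENNReal.ofReal_pow hX0,
          Real.exp_neg, ENNReal.ofReal_inv_of_pos (Real.exp_pos c),
          div_eq_mul_inv, mul_comm]

lemma llog32 : Real.log (3/2) ≤ 5/12 := by
  rw [Real.log_le_iff_le_exp (by norm_num)]
  have h5 : Real.exp (5/12) ^ 12 = Real.exp 5 := by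
    rw [← Real.exp_nat_mul]; norm_num
  have he : (2.7182818283:ℝ) < Real.exp 1 := Real.exp_one_gt_d9
  have h5' : (2.7182818283:ℝ)^5 ≤ Real.exp 5 := by
    rw [show (5:ℝ) = ((5:ℕ):ℝ)*1 by norm_num, Real.exp_nat_mul]
    exact pow_le_pow_left₀ (by norm_num) he.le 5
  refine le_of_pow_le_pow_left₀ (n := 12) (by norm_num) (Real.exp_nonneg _) ?_
  rw [h5]
  refine le_trans ?_ h5'
  norm_num

lemma num1 (n : ℕ) (σ : ℝ) (hσ0 : 0 < σ) (hσ1 : σ < 1) :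
    Real.exp (-(Real.log 2 * (2*σ*n))) * (σ * Real.exp (Real.log 2) + (1 - σ))^n
      ≤ Real.exp (-σ*n/3) := by
  have hσn : 0 ≤ σ*n := by positivity
  rw [Real.exp_log (by norm_num : (0:ℝ) < 2)]
  have h1 : σ * 2 + (1-σ) = 1 + σ := by ring
  rw [h1]
  have hp : (1+σ)^n ≤ Real.exp (n*σ) := by
    rw [Real.exp_nat_mul]
    exact pow_le_pow_left₀ (by linarith) (by linarith [Real.add_one_le_exp σ]) n
  calc Real.exp (-(Real.log 2 * (2*σ*n))) * (1+σ)^n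
      ≤ Real.exp (-(Real.log 2 * (2*σ*n))) * Real.exp (n*σ) :=
        mul_le_mul_of_nonneg_left hp (Real.exp_nonneg _)
    _ = Real.exp (n*σ - Real.log 2 * (2*σ*n)) := by rw [← Real.exp_add]; ring_nf
    _ ≤ Real.exp (-σ*n/3) := by
        apply Real.exp_le_exp.mpr
        have hL : (0.6931471803:ℝ) < Real.log 2 := Real.log_two_gt_d9
        have := mul_le_mul_of_nonneg_left hL.le hσn
        nlinarith
  done

lemma num2 (n : ℕ) (σ : ℝ) (hσ0 : 0 < σ) (hσ1 : σ < 1) :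
    Real.exp (-(-Real.log 2 * ((1/2)*σ*n))) * (σ * Real.exp (-Real.log 2) + (1 - σ))^n
      ≤ Real.exp (-σ*n/8) := by
  have hσn : 0 ≤ σ*n := by positivity
  rw [show Real.exp (-Real.log 2) = (2:ℝ)⁻¹ by
    rw [Real.exp_neg, Real.exp_log (by norm_num : (0:ℝ) < 2)]]
  have h1 : σ * (2:ℝ)⁻¹ + (1-σ) = 1 + (-(σ/2)) := by ring
  rw [h1]
  have hp : (1 + (-(σ/2)))^n ≤ Real.exp (n*(-(σ/2))) := by
    rw [Real.exp_nat_mul]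
    exact pow_le_pow_left₀ (by linarith) (by linarith [Real.add_one_le_exp (-(σ/2))]) n
  calc Real.exp (-(-Real.log 2 * ((1/2)*σ*n))) * (1 + (-(σ/2)))^n
      ≤ Real.exp (-(-Real.log 2 * ((1/2)*σ*n))) * Real.exp (n*(-(σ/2))) :=
        mul_le_mul_of_nonneg_left hp (Real.exp_nonneg _)
    _ = Real.exp (Real.log 2 * ((1/2)*σ*n) - n*(σ/2)) := by rw [← Real.exp_add]; ring_nf
    _ ≤ Real.exp (-σ*n/8) := by
        apply Real.exp_le_exp.mpr
        have hL : Real.log 2 < 0.6931471808 := Real.log_two_lt_d9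
        have := mul_le_mul_of_nonneg_left hL.le hσn
        nlinarith

lemma num3 (n : ℕ) (σ : ℝ) (hσ0 : 0 < σ) (hσ3 : 3*σ ≤ 1) :
    Real.exp (-(Real.log (2/3) * (2*σ*n))) * ((3*σ) * Real.exp (Real.log (2/3)) + (1 - 3*σ))^n
      ≤ Real.exp (-σ*n/6) := by
  have hσn : 0 ≤ σ*n := by positivity
  rw [Real.exp_log (by norm_num : (0:ℝ) < 2/3)]
  have h1 : (3*σ) * (2/3) + (1-3*σ) = 1 + (-σ) := by ring
  rw [h1]
  have hp : (1 + (-σ))^n ≤ Real.exp (n*(-σ)) := by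
    rw [Real.exp_nat_mul]
    exact pow_le_pow_left₀ (by linarith) (by linarith [Real.add_one_le_exp (-σ)]) n
  have hlog : Real.log (2/3) = -Real.log (3/2) := by
    rw [show (2/3:ℝ) = (3/2)⁻¹ by norm_num, Real.log_inv]
  calc Real.exp (-(Real.log (2/3) * (2*σ*n))) * (1 + (-σ))^n
      ≤ Real.exp (-(Real.log (2/3) * (2*σ*n))) * Real.exp (n*(-σ)) :=
        mul_le_mul_of_nonneg_left hp (Real.exp_nonneg _)
    _ = Real.exp (Real.log (3/2) * (2*σ*n) - n*σ) := by
        rw [← Real.exp_add, hlog]; ring_nf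
    _ ≤ Real.exp (-σ*n/6) := by
        apply Real.exp_le_exp.mpr
        have hL : Real.log (3/2) ≤ 5/12 := llog32
        have h0 : 0 ≤ Real.log (3/2) := Real.log_nonneg (by norm_num)
        have := mul_le_mul_of_nonneg_left hL hσn
        nlinarith

lemma main_core (n : ℕ) (σ : ℝ) (hσ0 : 0 < σ) (hσ1 : σ < 1)
    (T₃ : Set (Fin n → ℝ)) (hT₃ : MeasurableSet T₃)
    (hb3 : (Measure.pi fun _ : Fin n => unif) T₃ ≤ ENNReal.ofReal (Real.exp (-σ*n/6)))
    (hincl : ∀ ξ : Fin n → ℝ, ξ ∉ T₃ → ∀ k : ℕ, (k:ℝ) < 2*σ*n →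
      ∀ a : Fin n, ((univ.filter fun a' => ξ a' < ξ a).card < k) → ξ a < 3*σ) :
    ENNReal.ofReal
        (1 - Real.exp (-σ*n/3) - Real.exp (-σ*n/6) - Real.exp (-σ*n/8)) ≤
    ratingsMeasure n {ω |
      ((1/2)*σ*n < ((Finset.univ.filter fun j => ω.2 j < σ).card : ℝ) ∧
        ((Finset.univ.filter fun j => ω.2 j < σ).card : ℝ) < 2*σ*n) ∧
      ∀ a : Fin n,
        (Finset.univ.filter fun a' => ω.1 a' < ω.1 a).card <
          (Finset.univ.filter fun j => ω.2 j < σ).card →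
        ω.1 a < 3*σ} := by
  classical
  set ν : Measure (Fin n → ℝ) := Measure.pi fun _ => unif with hνdef
  have hprob : IsProbabilityMeasure ν := by rw [hνdef]; infer_instance
  have hprob2 : IsProbabilityMeasure (ratingsMeasure n) := by
    rw [ratingsMeasure]; infer_instance
  set μ2 := ratingsMeasure n with hμ2
  set E : Set ((Fin n → ℝ) × (Fin n → ℝ)) := {ω |
      ((1/2)*σ*n < ((Finset.univ.filter fun j => ω.2 j < σ).card : ℝ) ∧
        ((Finset.univ.filter fun j => ω.2 j < σ).card : ℝ) < 2*σ*n) ∧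
      ∀ a : Fin n,
        (Finset.univ.filter fun a' => ω.1 a' < ω.1 a).card <
          (Finset.univ.filter fun j => ω.2 j < σ).card →
        ω.1 a < 3*σ} with hE
  set t₁ : ℝ := Real.log 2 with ht₁
  set t₂ : ℝ := -Real.log 2 with ht₂
  have ht₁pos : 0 < t₁ := Real.log_pos (by norm_num)
  have ht₂neg : t₂ < 0 := by rw [ht₂]; linarith
  set T₁ : Set (Fin n → ℝ) :=
    {η | Real.exp (t₁ * (2*σ*n)) ≤ Real.exp (t₁ * (((univ : Finset (Fin n)).filter fun j => η j < σ).card : ℝ))} with hT₁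
  set T₂ : Set (Fin n → ℝ) :=
    {η | Real.exp (t₂ * ((1/2)*σ*n)) ≤ Real.exp (t₂ * (((univ : Finset (Fin n)).filter fun j => η j < σ).card : ℝ))} with hT₂
  have hT₁meas : MeasurableSet T₁ :=
    measurableSet_le measurable_const
      (Real.measurable_exp.comp ((cnt_measurable n σ).const_mul t₁))
  have hT₂meas : MeasurableSet T₂ :=
    measurableSet_le measurable_const
      (Real.measurable_exp.comp ((cnt_measurable n σ).const_mul t₂))
  have hmapsnd : ∀ T : Set (Fin n → ℝ), MeasurableSet T → μ2 (Prod.snd ⁻¹' T) = ν T := by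
    intro T hT
    rw [hμ2, ratingsMeasure, ← Measure.map_apply measurable_snd hT, Measure.map_snd_prod,
      measure_univ, one_smul]
  have hmapfst : ∀ T : Set (Fin n → ℝ), MeasurableSet T → μ2 (Prod.fst ⁻¹' T) = ν T := by
    intro T hT
    rw [hμ2, ratingsMeasure, ← Measure.map_apply measurable_fst hT, Measure.map_fst_prod,
      measure_univ, one_smul]
  -- inclusion
  have hsub : Eᶜ ⊆ (Prod.snd ⁻¹' T₁ ∪ Prod.snd ⁻¹' T₂) ∪ Prod.fst ⁻¹' T₃ := by
    rw [Set.compl_subset_comm]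
    intro ω hω
    simp only [Set.mem_compl_iff, Set.mem_union, Set.mem_preimage, not_or] at hω
    obtain ⟨⟨hω1, hω2⟩, hω3⟩ := hω
    have hKlt : (((univ : Finset (Fin n)).filter fun j => ω.2 j < σ).card : ℝ) < 2*σ*n := by
      rw [hT₁, Set.mem_setOf_eq, not_le, Real.exp_lt_exp] at hω1
      exact lt_of_mul_lt_mul_left hω1 ht₁pos.le
    have hKgt : (1/2)*σ*n < (((univ : Finset (Fin n)).filter fun j => ω.2 j < σ).card : ℝ) := by
      rw [hT₂, Set.mem_setOf_eq, not_le, Real.exp_lt_exp] at hω2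
      nlinarith
    refine ⟨⟨hKgt, hKlt⟩, ?_⟩
    intro a ha
    exact hincl ω.1 hω3 _ hKlt a ha
  -- measure bounds
  have h1 : μ2 (Prod.snd ⁻¹' T₁) ≤ ENNReal.ofReal (Real.exp (-σ*n/3)) := by
    rw [hmapsnd _ hT₁meas]
    refine le_trans (chernoff n hσ0.le hσ1.le t₁ (t₁ * (2*σ*n))) ?_
    exact ENNReal.ofReal_le_ofReal (num1 n σ hσ0 hσ1)
  have h2 : μ2 (Prod.snd ⁻¹' T₂) ≤ ENNReal.ofReal (Real.exp (-σ*n/8)) := by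
    rw [hmapsnd _ hT₂meas]
    refine le_trans (chernoff n hσ0.le hσ1.le t₂ (t₂ * ((1/2)*σ*n))) ?_
    exact ENNReal.ofReal_le_ofReal (num2 n σ hσ0 hσ1)
  have h3 : μ2 (Prod.fst ⁻¹' T₃) ≤ ENNReal.ofReal (Real.exp (-σ*n/6)) := by
    rw [hmapfst _ hT₃]; exact hb3
  have hEc : μ2 Eᶜ ≤ ENNReal.ofReal (Real.exp (-σ*n/3) + Real.exp (-σ*n/8) + Real.exp (-σ*n/6)) := by
    calc μ2 Eᶜ ≤ μ2 ((Prod.snd ⁻¹' T₁ ∪ Prod.snd ⁻¹' T₂) ∪ Prod.fst ⁻¹' T₃) := measure_mono hsub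
      _ ≤ (μ2 (Prod.snd ⁻¹' T₁) + μ2 (Prod.snd ⁻¹' T₂)) + μ2 (Prod.fst ⁻¹' T₃) :=
          le_trans (measure_union_le _ _) (add_le_add (measure_union_le _ _) le_rfl)
      _ ≤ (ENNReal.ofReal (Real.exp (-σ*n/3)) + ENNReal.ofReal (Real.exp (-σ*n/8)))
            + ENNReal.ofReal (Real.exp (-σ*n/6)) := add_le_add (add_le_add h1 h2) h3
      _ = ENNReal.ofReal (Real.exp (-σ*n/3) + Real.exp (-σ*n/8) + Real.exp (-σ*n/6)) := by
          rw [← ENNReal.ofReal_add (Real.exp_nonneg _) (Real.exp_nonneg _),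
            ← ENNReal.ofReal_add (by positivity) (Real.exp_nonneg _)]
  calc ENNReal.ofReal (1 - Real.exp (-σ*n/3) - Real.exp (-σ*n/6) - Real.exp (-σ*n/8))
      ≤ 1 - μ2 Eᶜ := by
        rw [show (1 - Real.exp (-σ*n/3) - Real.exp (-σ*n/6) - Real.exp (-σ*n/8))
            = 1 - (Real.exp (-σ*n/3) + Real.exp (-σ*n/8) + Real.exp (-σ*n/6)) by ring]
        rw [ENNReal.ofReal_sub _ (by positivity), ENNReal.ofReal_one]
        exact tsub_le_tsub_left hEc 1
    _ ≤ μ2 E := by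
        rw [tsub_le_iff_right]
        calc (1:ℝ≥0∞) = μ2 Set.univ := measure_univ.symm
          _ = μ2 (E ∪ Eᶜ) := by rw [Set.union_compl_self]
          _ ≤ μ2 E + μ2 Eᶜ := measure_union_le _ _

/-- Let `0 < σ < 1` and let `K` be the number of women with public
rating less than `σ`. Then with probability at least
`1 − exp(−σn/3) − exp(−σn/6) − exp(−σn/8)`: `(1/2)σn < K < 2σn` and each of the `K`
lowest-rated men (those with fewer than `K` men strictly below them) has public
rating less than `3σ`. Here `ω.1` are the men's ratings and `ω.2` the women's. -/
theorem stmt19 (n : ℕ) (σ : ℝ) (hσ0 : 0 < σ) (hσ1 : σ < 1) :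
    ENNReal.ofReal
        (1 - Real.exp (-σ*n/3) - Real.exp (-σ*n/6) - Real.exp (-σ*n/8)) ≤
    ratingsMeasure n {ω |
      ((1/2)*σ*n < ((Finset.univ.filter fun j => ω.2 j < σ).card : ℝ) ∧
        ((Finset.univ.filter fun j => ω.2 j < σ).card : ℝ) < 2*σ*n) ∧
      ∀ a : Fin n,
        (Finset.univ.filter fun a' => ω.1 a' < ω.1 a).card <
          (Finset.univ.filter fun j => ω.2 j < σ).card →
        ω.1 a < 3*σ} := by
  classical
  rcases le_or_gt (3*σ) 1 with hσ3 | hσ3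
  · -- 3σ ≤ 1 : Chernoff bound on the men's count
    set t₃ : ℝ := Real.log (2/3) with ht₃
    have ht₃neg : t₃ < 0 := Real.log_neg (by norm_num) (by norm_num)
    refine main_core n σ hσ0 hσ1
      {ξ | Real.exp (t₃ * (2*σ*n)) ≤ Real.exp (t₃ * (((univ : Finset (Fin n)).filter fun j => ξ j < 3*σ).card : ℝ))}
      (measurableSet_le measurable_const
        (Real.measurable_exp.comp ((cnt_measurable n (3*σ)).const_mul t₃))) ?_ ?_
    · refine le_trans (chernoff n (by positivity) hσ3 t₃ (t₃ * (2*σ*n))) ?_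
      exact ENNReal.ofReal_le_ofReal (num3 n σ hσ0 hσ3)
    · intro ξ hξ k hk a ha
      rw [Set.mem_setOf_eq, not_le, Real.exp_lt_exp] at hξ
      have hM : 2*σ*n < (((univ : Finset (Fin n)).filter fun j => ξ j < 3*σ).card : ℝ) := by
        nlinarith
      by_contra hcon
      push_neg at hcon
      have hss : (univ : Finset (Fin n)).filter (fun j => ξ j < 3*σ)
          ⊆ (univ : Finset (Fin n)).filter (fun a' => ξ a' < ξ a) := by
        intro i hi
        simp only [mem_filter, mem_univ, true_and] at hi ⊢
        exact lt_of_lt_of_le hi hcon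
      have hcard := Finset.card_le_card hss
      have : (((univ : Finset (Fin n)).filter fun j => ξ j < 3*σ).card : ℝ) < k := by
        exact_mod_cast lt_of_le_of_lt hcard ha
      linarith
  · -- 3σ > 1 : a.s. all ratings are below 3σ
    refine main_core n σ hσ0 hσ1 {ξ | ∃ i, 3*σ ≤ ξ i} ?_ ?_ ?_
    · have : {ξ : Fin n → ℝ | ∃ i, 3*σ ≤ ξ i}
          = ⋃ i, (fun ξ : Fin n → ℝ => ξ i) ⁻¹' Set.Ici (3*σ) := by
        ext ξ; simp [Set.mem_iUnion]
      rw [this]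
      exact MeasurableSet.iUnion fun i => (measurable_pi_apply i) measurableSet_Ici
    · have h0 : unif (Set.Ici (3*σ)) = 0 := by
        rw [unif_Ici (by positivity), ENNReal.ofReal_eq_zero]
        linarith
      have : {ξ : Fin n → ℝ | ∃ i, 3*σ ≤ ξ i}
          = ⋃ i, (fun ξ : Fin n → ℝ => ξ i) ⁻¹' Set.Ici (3*σ) := by
        ext ξ; simp [Set.mem_iUnion]
      rw [this]
      have hz : (Measure.pi fun _ : Fin n => unif)
          (⋃ i, (fun ξ : Fin n → ℝ => ξ i) ⁻¹' Set.Ici (3*σ)) = 0 :=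
        measure_iUnion_null fun i =>
          Measure.pi_eval_preimage_null (μ := fun _ : Fin n => unif) (i := i) h0
      rw [hz]
      exact zero_le
    · intro ξ hξ k hk a ha
      simp only [Set.mem_setOf_eq, not_exists, not_le] at hξ
      exact hξ a
end
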